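/- Let q ∈ ℕ and let ω_1, ..., ω_{2q} be the 2q-th roots of -1 ordered so that for any ρ in the open sector 0 < arg ρ < π/(2q), Re(ρω_1) ≤ Re(ρω_2) ≤ ... ≤ Re(ρω_{2q}). Then with ω = e^{iπ/(2q)}, the ordered list is (ω^{2q-1}, ω^{-(2q-1)}, ω^{2q-3}, ω^{-(2q-3)}, ..., ω^3, ω^{-3}, ω^1, ω^{-1}); in particular ω_q = ω^{-(q+1)} and ω_{q+1} = ω^{q-1} = -ω_q when q is even. -/

import Mathlib

open Complex

/-- Ordering of the `2q`-th roots of `-1`: with `ω = e^{iπ/(2q)}`, the list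
`L = (ω^{2q-1}, ω^{-(2q-1)}, ω^{2q-3}, ω^{-(2q-3)}, …, ω^3, ω^{-3}, ω^1, ω^{-1})`
consists of `2q`-th roots of `-1`, is injective (so lists all of them), and
satisfies `Re(ρ L_1) ≤ Re(ρ L_2) ≤ … ≤ Re(ρ L_{2q})` for every `ρ` in the open
sector `0 < arg ρ < π/(2q)`; in particular (with 1-based indexing)
`ω_q = ω^{-(q+1)}`, `ω_{q+1} = ω^{q-1} = -ω_q` when `q` is even. -/
theorem roots_of_neg_one_ordering (q : ℕ) (hq : 1 ≤ q)
    (ω : ℂ) (hω : ω = Complex.exp (Real.pi * Complex.I / (2 * q)))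
    (L : Fin (2 * q) → ℂ)
    (hL : ∀ i : Fin (2 * q),
      L i = ω ^ ((-1 : ℤ) ^ (i : ℕ) * (2 * (q : ℤ) - 1 - 2 * (((i : ℕ) / 2 : ℕ) : ℤ)))) :
    (∀ i, L i ^ (2 * q) = -1) ∧
    Function.Injective L ∧
    (∀ ρ : ℂ, 0 < ρ.arg → ρ.arg < Real.pi / (2 * q) →
      ∀ i j : Fin (2 * q), i ≤ j → (ρ * L i).re ≤ (ρ * L j).re) ∧
    (Even q →
      L ⟨q, by omega⟩ = ω ^ ((q : ℤ) - 1) ∧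
      L ⟨q - 1, by omega⟩ = ω ^ (-((q : ℤ) + 1)) ∧
      L ⟨q, by omega⟩ = -L ⟨q - 1, by omega⟩) := by
  have hq0 : (0:ℝ) < 2 * q := by positivity
  set α : ℝ := Real.pi / (2 * q) with hαdef
  have hαpos : 0 < α := by positivity
  have hαle : α ≤ Real.pi := by
    rw [hαdef]
    apply div_le_self Real.pi_pos.le
    have : (1:ℝ) ≤ (q:ℝ) := by exact_mod_cast hq
    linarith
  have h2qα : (2*(q:ℝ)) * α = Real.pi := by
    rw [hαdef]; field_simp
  have hωexp : ω = Complex.exp (↑α * I) := by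
    rw [hω]; congr 1; rw [hαdef]; push_cast; ring
  have hω0 : ω ≠ 0 := by rw [hωexp]; exact Complex.exp_ne_zero _
  have hzpow : ∀ n : ℤ, ω ^ n = Complex.exp (↑((n : ℝ) * α) * I) := by
    intro n
    rw [hωexp, ← Complex.exp_int_mul]
    congr 1; push_cast; ring
  set E : ℕ → ℤ := fun i => (-1 : ℤ) ^ i * (2 * (q : ℤ) - 1 - 2 * ((i / 2 : ℕ) : ℤ)) with hEdef
  have hLE : ∀ i : Fin (2 * q), L i = ω ^ E (i : ℕ) := hL
  have hEval : ∀ i : ℕ, (Even i → E i = 2 * q - 1 - 2 * ((i/2 : ℕ) : ℤ)) ∧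
      (Odd i → E i = -(2 * q - 1 - 2 * ((i/2 : ℕ) : ℤ))) := by
    intro i
    constructor
    · intro h; rw [hEdef]; simp [h.neg_one_pow]
    · intro h; rw [hEdef]; simp [h.neg_one_pow]
  have hEodd : ∀ i : ℕ, Odd (E i) := by
    intro i
    rcases Nat.even_or_odd i with h | h
    · rw [(hEval i).1 h]; rw [Int.odd_iff]; omega
    · rw [(hEval i).2 h]; rw [Int.odd_iff]; omega
  have hEbound : ∀ i : ℕ, i < 2 * q → -(2*(q:ℤ) - 1) ≤ E i ∧ E i ≤ 2 * (q:ℤ) - 1 := by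
    intro i hi
    rcases Nat.even_or_odd i with h | h
    · rw [(hEval i).1 h]; omega
    · rw [(hEval i).2 h]; omega
  have hEinj : ∀ i j : ℕ, i < 2 * q → j < 2 * q → E i = E j → i = j := by
    intro i j hi hj hij
    rcases Nat.even_or_odd i with h | h <;> rcases Nat.even_or_odd j with h' | h'
    · rw [(hEval i).1 h, (hEval j).1 h'] at hij
      rw [Nat.even_iff] at h h'
      omega
    · rw [(hEval i).1 h, (hEval j).2 h'] at hij
      rw [Nat.even_iff] at h; rw [Nat.odd_iff] at h'
      omega
    · rw [(hEval i).2 h, (hEval j).1 h'] at hij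
      rw [Nat.odd_iff] at h; rw [Nat.even_iff] at h'
      omega
    · rw [(hEval i).2 h, (hEval j).2 h'] at hij
      rw [Nat.odd_iff] at h h'
      omega
  have hω2q : ω ^ (2*(q:ℤ)) = -1 := by
    rw [hzpow]
    have : ((2*(q:ℤ) : ℤ):ℝ) * α = Real.pi := by push_cast; linarith
    rw [this]
    exact Complex.exp_pi_mul_I
  -- injectivity of zpow on a bounded window
  have hzinj : ∀ a b : ℤ, ω ^ a = ω ^ b → -(4*(q:ℤ)) < a - b → a - b < 4*q → a = b := by
    intro a b hab h1 h2
    rw [hzpow, hzpow, Complex.exp_eq_exp_iff_exists_int] at hab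
    obtain ⟨n, hn⟩ := hab
    have hn' : (a:ℝ) * α = b * α + n * (2*Real.pi) := by
      have := congrArg Complex.im hn
      simpa using this
    rw [hαdef] at hn'
    have hπ : Real.pi ≠ 0 := Real.pi_ne_zero
    have h2q' : (2*(q:ℝ)) ≠ 0 := ne_of_gt hq0
    field_simp at hn'
    have h4 : ((a - b - 4*q*n : ℤ):ℝ) * Real.pi = 0 := by push_cast; nlinarith [hn']
    have h5 : ((a - b - 4*q*n : ℤ):ℝ) = 0 := by
      rcases mul_eq_zero.mp h4 with h | h
      · exact h
      · exact absurd h hπ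
    have h6 : (a - b - 4*q*n : ℤ) = 0 := by exact_mod_cast h5
    have hqz : (1:ℤ) ≤ (q:ℤ) := by exact_mod_cast hq
    have hn1 : n < 1 := by nlinarith
    have hn2 : -1 < n := by nlinarith
    have hn0 : n = 0 := by omega
    subst hn0
    simp only [mul_zero, sub_zero] at h6
    omega
  refine ⟨?_, ?_, ?_, ?_⟩
  · -- each L i is a 2q-th root of -1
    intro i
    rw [hLE i, ← zpow_natCast (ω ^ E (i:ℕ)), ← zpow_mul]
    have : E (i:ℕ) * ((2*q : ℕ) : ℤ) = (2*(q:ℤ)) * E (i:ℕ) := by push_cast; ring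
    rw [this, zpow_mul, hω2q]
    exact (hEodd i).neg_one_zpow
  · -- injectivity
    intro i j hij
    rw [hLE i, hLE j] at hij
    have hbi := hEbound i i.2
    have hbj := hEbound j j.2
    have := hzinj _ _ hij (by omega) (by omega)
    exact Fin.ext (hEinj i j i.2 j.2 this)
  · -- monotonicity
    intro ρ hθ1 hθ2
    set θ := ρ.arg with hθdef
    have hre : ∀ n : ℤ, (ρ * ω ^ n).re = ‖ρ‖ * Real.cos (θ + n * α) := by
      intro n
      rw [hzpow]
      conv_lhs => rw [← Complex.norm_mul_exp_arg_mul_I ρ]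
      rw [mul_assoc, ← Complex.exp_add]
      have : (↑θ * I + ↑((n:ℝ) * α) * I) = ↑(θ + n * α) * I := by push_cast; ring
      rw [this, Complex.re_ofReal_mul, Complex.exp_ofReal_mul_I_re]
    have hsinθ : 0 ≤ Real.sin θ :=
      Real.sin_nonneg_of_nonneg_of_le_pi (le_of_lt hθ1) (by linarith)
    have hsinθα : Real.sin (θ - α) ≤ 0 := by
      have h1 : 0 ≤ Real.sin (α - θ) :=
        Real.sin_nonneg_of_nonneg_of_le_pi (by linarith) (by linarith)
      rw [show θ - α = -(α - θ) by ring, Real.sin_neg]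
      linarith
    have hsinc : ∀ c : ℤ, 0 ≤ c → c ≤ 2*(q:ℤ) → 0 ≤ Real.sin ((c:ℝ) * α) := by
      intro c h1 h2
      apply Real.sin_nonneg_of_nonneg_of_le_pi
      · exact mul_nonneg (by exact_mod_cast h1) hαpos.le
      · have hc2 : (c:ℝ) ≤ 2*(q:ℝ) := by exact_mod_cast h2
        nlinarith
    have key1 : ∀ c : ℤ, 0 ≤ c → c ≤ 2*(q:ℤ) →
        Real.cos (θ + (c:ℝ) * α) ≤ Real.cos (θ + ((-c : ℤ):ℝ) * α) := by
      intro c h1 h2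
      have hx : θ + ((-c:ℤ):ℝ) * α = θ - (c:ℝ)*α := by push_cast; ring
      rw [hx, Real.cos_add, Real.cos_sub]
      have := mul_nonneg hsinθ (hsinc c h1 h2)
      linarith
    have key2 : ∀ c : ℤ, 2 ≤ c → c ≤ 2*(q:ℤ) →
        Real.cos (θ + ((-c:ℤ):ℝ) * α) ≤ Real.cos (θ + ((c-2:ℤ):ℝ) * α) := by
      intro c h1 h2
      have hx : θ + ((-c:ℤ):ℝ)*α = (θ - α) - ((c-1:ℤ):ℝ)*α := by push_cast; ring
      have hy : θ + ((c-2:ℤ):ℝ)*α = (θ - α) + ((c-1:ℤ):ℝ)*α := by push_cast; ring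
      rw [hx, hy, Real.cos_sub, Real.cos_add]
      have hs : 0 ≤ Real.sin (((c-1:ℤ):ℝ)*α) := hsinc (c-1) (by omega) (by omega)
      have := mul_nonpos_of_nonpos_of_nonneg hsinθα hs
      linarith
    have step : ∀ i : ℕ, i + 1 < 2*q →
        Real.cos (θ + (E i : ℝ) * α) ≤ Real.cos (θ + (E (i+1) : ℝ) * α) := by
      intro i h
      rcases Nat.even_or_odd i with he | ho
      · have hdiv : (i+1)/2 = i/2 := by
          rw [Nat.even_iff] at he; omega
        have e2 : E (i+1) = -(2*(q:ℤ) - 1 - 2*((i/2 : ℕ):ℤ)) := by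
          rw [(hEval (i+1)).2 he.add_one, hdiv]
        rw [(hEval i).1 he, e2]
        refine key1 _ (by omega) (by omega)
      · have hdiv : (i+1)/2 = i/2 + 1 := by
          rw [Nat.odd_iff] at ho; omega
        have e2 : E (i+1) = (2*(q:ℤ) - 1 - 2*((i/2 : ℕ):ℤ)) - 2 := by
          rw [(hEval (i+1)).1 ho.add_one, hdiv]
          push_cast; ring
        rw [(hEval i).2 ho, e2]
        have ho' := ho
        rw [Nat.odd_iff] at ho'
        refine key2 _ (by omega) (by omega)
    have chain : ∀ d : ℕ, ∀ k : ℕ, k + d < 2*q →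
        Real.cos (θ + (E k : ℝ) * α) ≤ Real.cos (θ + (E (k+d) : ℝ) * α) := by
      intro d
      induction d with
      | zero => intro k _; simp
      | succ d ih =>
        intro k hk
        calc Real.cos (θ + (E k : ℝ) * α) ≤ Real.cos (θ + (E (k+d) : ℝ) * α) :=
              ih k (by omega)
          _ ≤ Real.cos (θ + (E (k+d+1) : ℝ) * α) := step (k+d) (by omega)
          _ = Real.cos (θ + (E (k+(d+1)) : ℝ) * α) := by rw [show k+d+1 = k+(d+1) by ring]
    intro i j hij
    rw [hLE i, hLE j, hre, hre]
    apply mul_le_mul_of_nonneg_left _ (norm_nonneg ρ)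
    have hij' : (i:ℕ) ≤ (j:ℕ) := hij
    have h1 : (i:ℕ) + ((j:ℕ) - (i:ℕ)) = (j:ℕ) := by omega
    have := chain ((j:ℕ) - (i:ℕ)) (i:ℕ) (by omega)
    rw [h1] at this
    exact this
  · -- the even-q special values
    intro hEq
    obtain ⟨t, ht⟩ := hEq
    have hq2 : 2 ≤ q := by omega
    have hEq1 : E q = (q:ℤ) - 1 := by
      rw [(hEval q).1 ⟨t, ht⟩]
      omega
    have hEq2 : E (q-1) = -((q:ℤ) + 1) := by
      rw [(hEval (q-1)).2 ⟨t-1, by omega⟩]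
      omega
    have hL1 : L ⟨q, by omega⟩ = ω ^ ((q:ℤ) - 1) := by
      rw [hLE ⟨q, by omega⟩]
      simp only [Fin.val_mk]
      rw [hEq1]
    have hL2 : L ⟨q - 1, by omega⟩ = ω ^ (-((q:ℤ) + 1)) := by
      rw [hLE ⟨q - 1, by omega⟩]
      simp only [Fin.val_mk]
      rw [hEq2]
    refine ⟨hL1, hL2, ?_⟩
    rw [hL1, hL2]
    rw [show (q:ℤ) - 1 = -((q:ℤ)+1) + 2*(q:ℤ) by ring, zpow_add₀ hω0, hω2q]
    ring
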